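/- Along any solution of the chemostat system the derivative of the Lyapunov function V of Theorem 2 satisfies V' = x_1 (p_1(S) - D_1)(F(λ_1) - F(S))/F(λ_1) + Σ_{i=2}^n x_i h_i(S), where F(S) = f_1(S)/(S^0 - S) and h_i(S) = (p_i(S) - D_i)(α_i - g_i(S)) with g_i(S) = (f_i(S)/f_1(λ_1)) · ((p_1(S) - D_1)/(p_i(S) - D_i)) · ((S^0 - λ_1)/(S^0 - S)). -/

import Mathlib

open Set

/-- Along any solution of the chemostat system, the derivative of the
Lyapunov function `V` satisfies
`V' = x₁ (p₁(S)-D₁)(F(λ₁)-F(S))/F(λ₁) + ∑_{i≥2} xᵢ hᵢ(S)`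
where `F(S) = f₁(S)/(S⁰-S)` and `hᵢ(S) = (pᵢ(S)-Dᵢ)(αᵢ - gᵢ(S))` with
`gᵢ(S) = (fᵢ(S)/f₁(λ₁))·((p₁(S)-D₁)/(pᵢ(S)-Dᵢ))·((S⁰-λ₁)/(S⁰-S))`,
at points where `pᵢ(S) ≠ Dᵢ` for all `i ≥ 2`. Species `1` is the index `0 : Fin n`. -/
theorem chemostat_lyapunov_derivative_formula
    (n : ℕ) [NeZero n] (S0 D lam1 : ℝ) (Di : Fin n → ℝ)
    (f p : Fin n → ℝ → ℝ) (α : Fin n → ℝ)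
    (hS0 : 0 < S0) (hD : 0 < D) (hDi : ∀ i, 0 < Di i)
    (hfc : ∀ i, Continuous (f i)) (hpc : ∀ i, Continuous (p i))
    (hlam : 0 < lam1) (hlamS0 : lam1 < S0)
    (hp1lam : p 0 lam1 = Di 0) (hf1 : 0 < f 0 lam1)
    (xstar : ℝ) (hxstar : xstar = D * (S0 - lam1) / f 0 lam1)
    (V : ℝ → (Fin n → ℝ) → ℝ)
    (hV : ∀ s y, V s y =
      (∫ σ in lam1..s, (p 0 σ - Di 0) * (S0 - lam1) / (f 0 lam1 * (S0 - σ))) +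
      (∫ ξ in xstar..(y 0), (ξ - xstar) / ξ) +
      ∑ i ∈ Finset.univ.erase (0 : Fin n), α i * y i)
    (g : Fin n → ℝ → ℝ) (Fn : ℝ → ℝ) (hF : ∀ s, Fn s = f 0 s / (S0 - s))
    (hg : ∀ i s, g i s = (f i s / f 0 lam1) * ((p 0 s - Di 0) / (p i s - Di i)) *
      ((S0 - lam1) / (S0 - s)))
    (h : Fin n → ℝ → ℝ)
    (hh : ∀ i s, h i s = (p i s - Di i) * (α i - g i s))
    (S : ℝ → ℝ) (x : Fin n → ℝ → ℝ) (t0 : ℝ)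
    (hSode : HasDerivAt S (D * (S0 - S t0) - ∑ i, f i (S t0) * x i t0) t0)
    (hxode : ∀ i, HasDerivAt (x i) ((p i (S t0) - Di i) * x i t0) t0)
    (hSpos : 0 < S t0) (hSlt : S t0 < S0) (hxpos : ∀ i, 0 < x i t0)
    (hpne : ∀ i : Fin n, i ≠ 0 → p i (S t0) ≠ Di i) :
    HasDerivAt (fun t => V (S t) (fun i => x i t))
      (x 0 t0 * (p 0 (S t0) - Di 0) * (Fn lam1 - Fn (S t0)) / Fn lam1 +
        ∑ i ∈ Finset.univ.erase (0 : Fin n), x i t0 * h i (S t0)) t0 := by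
  classical
  set s := S t0 with hs
  have hfne : f 0 lam1 ≠ 0 := ne_of_gt hf1
  have hSne : S0 - s ≠ 0 := sub_ne_zero.mpr (ne_of_gt hSlt)
  have hlamne : S0 - lam1 ≠ 0 := sub_ne_zero.mpr (ne_of_gt hlamS0)
  have hx0 : (0:ℝ) < x 0 t0 := hxpos 0
  have hx0ne : x 0 t0 ≠ 0 := ne_of_gt hx0
  have hxstarpos : 0 < xstar := by
    rw [hxstar]
    exact div_pos (mul_pos hD (sub_pos.mpr hlamS0)) hf1
  set g1 : ℝ → ℝ := fun σ => (p 0 σ - Di 0) * (S0 - lam1) / (f 0 lam1 * (S0 - σ))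
    with hg1
  -- derivative of the first integral
  have hA : HasDerivAt (fun u => ∫ σ in lam1..u, g1 σ) (g1 s) s := by
    apply intervalIntegral.integral_hasDerivAt_right
    · apply ContinuousOn.intervalIntegrable
      apply ContinuousOn.div
      · exact (((hpc 0).sub continuous_const).mul continuous_const).continuousOn
      · exact (continuous_const.mul (continuous_const.sub continuous_id)).continuousOn
      · intro σ hσ
        have hσle : σ ≤ max lam1 s := hσ.2
        have : σ < S0 := lt_of_le_of_lt hσle (max_lt hlamS0 hSlt)
        exact mul_ne_zero hfne (sub_ne_zero.mpr (ne_of_gt this))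
    · exact ((((hpc 0).sub continuous_const).mul continuous_const).measurable.div
        (continuous_const.mul (continuous_const.sub continuous_id)).measurable
        ).stronglyMeasurable.stronglyMeasurableAtFilter
    · exact ContinuousAt.div
        (((hpc 0).sub continuous_const).mul continuous_const).continuousAt
        (continuous_const.mul (continuous_const.sub continuous_id)).continuousAt
        (mul_ne_zero hfne hSne)
  set g2 : ℝ → ℝ := fun ξ => (ξ - xstar) / ξ with hg2
  have hB : HasDerivAt (fun u => ∫ ξ in xstar..u, g2 ξ) (g2 (x 0 t0)) (x 0 t0) := by
    apply intervalIntegral.integral_hasDerivAt_right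
    · apply ContinuousOn.intervalIntegrable
      apply ContinuousOn.div
      · exact (continuous_id.sub continuous_const).continuousOn
      · exact continuous_id.continuousOn
      · intro ξ hξ
        have : 0 < ξ := lt_of_lt_of_le (lt_min hxstarpos hx0) hξ.1
        exact ne_of_gt this
    · exact ((continuous_id.sub continuous_const).measurable.div
        continuous_id.measurable).stronglyMeasurable.stronglyMeasurableAtFilter
    · exact ContinuousAt.div (continuous_id.sub continuous_const).continuousAt
        continuous_id.continuousAt hx0ne
  have hAS := hA.comp t0 hSode
  have hBx := hB.comp t0 (hxode 0)
  have hsum : HasDerivAt (fun t => ∑ i ∈ Finset.univ.erase (0 : Fin n), α i * x i t)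
      (∑ i ∈ Finset.univ.erase (0 : Fin n), α i * ((p i s - Di i) * x i t0)) t0 :=
    HasDerivAt.fun_sum (fun i _ => (hxode i).const_mul (α i))
  have htot := (hAS.add hBx).add hsum
  have hfun : (fun t => V (S t) (fun i => x i t)) =
      (fun t => ((fun u => ∫ σ in lam1..u, g1 σ) ∘ S) t +
        ((fun u => ∫ ξ in xstar..u, g2 ξ) ∘ (x 0)) t +
        ∑ i ∈ Finset.univ.erase (0 : Fin n), α i * x i t) := by
    funext t
    simp [hV, Function.comp]
  rw [hfun]
  refine htot.congr_deriv ?_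
  -- value equality
  have hsplit : (∑ i, f i s * x i t0) =
      f 0 s * x 0 t0 + ∑ i ∈ Finset.univ.erase (0 : Fin n), f i s * x i t0 :=
    (Finset.add_sum_erase _ _ (Finset.mem_univ 0)).symm
  have hterm : ∀ i ∈ Finset.univ.erase (0 : Fin n),
      x i t0 * h i s = α i * ((p i s - Di i) * x i t0) - g1 s * (f i s * x i t0) := by
    intro i hi
    have hne : p i s - Di i ≠ 0 := sub_ne_zero.mpr (hpne i (Finset.mem_erase.mp hi).1)
    rw [hh, hg, hg1]
    field_simp
  rw [Finset.sum_congr rfl hterm, Finset.sum_sub_distrib, ← Finset.mul_sum, hsplit]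
  have hmain : x 0 t0 * (p 0 s - Di 0) * (Fn lam1 - Fn s) / Fn lam1 =
      g1 s * (D * (S0 - s) - f 0 s * x 0 t0) +
      g2 (x 0 t0) * ((p 0 s - Di 0) * x 0 t0) := by
    rw [hF, hF, hg1, hg2, hxstar]
    have hFne : f 0 lam1 / (S0 - lam1) ≠ 0 := div_ne_zero hfne hlamne
    field_simp
    ring
  rw [hmain]
  ring
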